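/- If (i,j) and (k,l) are two distinct elements of M lying in the box [0, c/gcd(a,c)) × [0, c/gcd(b,c)), then i ≠ k and j ≠ l. -/
import Mathlib

lemma aux_box (b c : ℕ) (hb : 0 < b) (hc : 0 < c) (x y : ℕ)
    (hx : x < c / Nat.gcd b c) (hy : y < c / Nat.gcd b c)
    (hd : (c : ℤ) ∣ (b : ℤ) * x - (b : ℤ) * y) : x = y := by
  set g := Nat.gcd b c with hg
  have hgpos : 0 < g := Nat.gcd_pos_of_pos_left _ hb
  obtain ⟨c', hc'⟩ := Nat.gcd_dvd_right b c
  obtain ⟨b', hb'⟩ := Nat.gcd_dvd_left b c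
  have hcdiv : c / g = c' := by rw [hc']; exact Nat.mul_div_cancel_left _ hgpos
  have hbdiv : b / g = b' := by rw [hb']; exact Nat.mul_div_cancel_left _ hgpos
  have hcop : Nat.Coprime b' c' := by
    rw [← hbdiv, ← hcdiv]; exact Nat.coprime_div_gcd_div_gcd hgpos
  have hd2 : (c' : ℤ) ∣ (b' : ℤ) * ((x : ℤ) - y) := by
    have h1 : ((g : ℤ) * c') ∣ (g : ℤ) * ((b' : ℤ) * ((x : ℤ) - y)) := by
      have : ((b : ℤ) * x - (b : ℤ) * y) = (g : ℤ) * ((b' : ℤ) * ((x : ℤ) - y)) := by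
        rw [hb']; push_cast; ring
      rw [← this]
      have : (c : ℤ) = (g : ℤ) * c' := by rw [hc']; push_cast; ring
      rw [← this]; exact hd
    exact (mul_dvd_mul_iff_left (by exact_mod_cast hgpos.ne' : (g : ℤ) ≠ 0)).mp h1
  have hcop' : IsCoprime (c' : ℤ) (b' : ℤ) := by
    rw [Int.isCoprime_iff_gcd_eq_one]
    simpa [Nat.coprime_comm] using hcop
  have hd3 : (c' : ℤ) ∣ (x : ℤ) - y := hcop'.dvd_of_dvd_mul_left hd2
  have hzero : (x : ℤ) - y = 0 := by
    refine Int.eq_zero_of_abs_lt_dvd hd3 ?_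
    rw [hcdiv] at hx hy
    rw [abs_lt]
    constructor <;> [skip; skip] <;> push_cast <;> omega
  omega

theorem stmt_2 (a b c : ℕ) (ha : 0 < a) (hb : 0 < b) (hc : 0 < c)
    (hgcd : Nat.gcd a (Nat.gcd b c) = 1)
    (i j k l : ℕ)
    (hij : c ∣ a * i + b * j) (hkl : c ∣ a * k + b * l)
    (hi : i < c / Nat.gcd a c) (hj : j < c / Nat.gcd b c)
    (hk : k < c / Nat.gcd a c) (hl : l < c / Nat.gcd b c)
    (hne : (i, j) ≠ (k, l)) :
    i ≠ k ∧ j ≠ l := by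
  have hijZ : (c : ℤ) ∣ a * i + b * j := by exact_mod_cast Int.natCast_dvd_natCast.mpr hij
  have hklZ : (c : ℤ) ∣ a * k + b * l := by exact_mod_cast Int.natCast_dvd_natCast.mpr hkl
  have h1 : i = k → j = l := by
    intro h
    apply aux_box b c hb hc j l hj hl
    have := dvd_sub hijZ hklZ
    have heq : ((a : ℤ) * i + b * j) - ((a : ℤ) * k + b * l) = (b : ℤ) * j - b * l := by
      rw [h]; ring
    rwa [heq] at this
  have h2 : j = l → i = k := by
    intro h
    apply aux_box a c ha hc i k hi hk
    have := dvd_sub hijZ hklZ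
    have heq : ((a : ℤ) * i + b * j) - ((a : ℤ) * k + b * l) = (a : ℤ) * i - a * k := by
      rw [h]; ring
    rwa [heq] at this
  constructor
  · intro h; exact hne (by rw [h, h1 h])
  · intro h; exact hne (by rw [h, h2 h])
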